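/- Let S be a finite nonempty subset of the d-dimensional square shaped graph with interior vertices Ṽ° = {x ∈ ℤ^d : |x_j| ≤ R, j=1,…,d} and boundary vertices ∂Ṽ = {x ∈ ℤ^d∖Ṽ° : ∃y ∈ Ṽ° with |x−y|=1}, with #S ≥ 2. Then every x ∈ S with x₁ = max{y₁ : y ∈ S} is an extreme point of S with respect to ∂Ṽ, every x ∈ S with x₁ = min{y₁ : y ∈ S} is an extreme point, and hence S has at least two extreme points (the two-points condition holds). -/

import Mathlib

open Finset

/-- Adjacency in the square lattice `ℤ^d` (Euclidean distance 1, i.e. `ℓ¹`-distance 1). -/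
def sqAdj (d : ℕ) (x y : Fin d → ℤ) : Prop := ∑ j, |x j - y j| = 1

/-- The interior vertices of the square shaped domain: `{x : |x_j| ≤ R}`. -/
def sqInt (d : ℕ) (R : ℤ) : Set (Fin d → ℤ) := {x | ∀ j, |x j| ≤ R}

/-- The boundary vertices: points outside the domain adjacent to an interior vertex. -/
def sqBdry (d : ℕ) (R : ℤ) : Set (Fin d → ℤ) :=
  {x | x ∉ sqInt d R ∧ ∃ y ∈ sqInt d R, sqAdj d x y}

/-- The vertex set `Ṽ° ∪ ∂Ṽ`. -/
def sqVerts (d : ℕ) (R : ℤ) : Set (Fin d → ℤ) := sqInt d R ∪ sqBdry d R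

/-- The square shaped graph: edges of the lattice with at least one interior end point
(no boundary-boundary edges). -/
def sqGraph (d : ℕ) (R : ℤ) : SimpleGraph ↥(sqVerts d R) where
  Adj a b := sqAdj d a.1 b.1 ∧ (a.1 ∈ sqInt d R ∨ b.1 ∈ sqInt d R)
  symm := by
    constructor
    intro a b h
    refine ⟨?_, h.2.symm⟩
    have := h.1
    simpa [sqAdj, abs_sub_comm] using this
  loopless := by
    constructor
    intro a h
    have := h.1
    simp [sqAdj] at this

/-- `v` is an extreme point of `S ⊆ Ṽ°` with respect to `∂Ṽ`: there is a boundary vertex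
`w` such that `v` is the unique nearest vertex of `S` to `w` in the graph distance. -/
def sqExtreme (d : ℕ) (R : ℤ) (S : Finset ↥(sqVerts d R)) (v : ↥(sqVerts d R)) : Prop :=
  v ∈ S ∧ ∃ w : ↥(sqVerts d R), w.1 ∈ sqBdry d R ∧
    ∀ u ∈ S, u ≠ v → (sqGraph d R).dist w v < (sqGraph d R).dist w u

section Aux

variable {d : ℕ} {R : ℤ}

lemma sq_sum_abs_update (x : Fin d → ℤ) (j : Fin d) (t : ℤ) :
    ∑ i, |x i - Function.update x j t i| = |x j - t| := by
  rw [Finset.sum_eq_single j]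
  · simp
  · intro i _ hij
    simp [Function.update_of_ne hij]
  · simp

/-- Lower bound: the `ℓ¹` distance is at most the length of any walk. -/
lemma sq_length_ge {a b : ↥(sqVerts d R)} (p : (sqGraph d R).Walk a b) :
    ∑ j, |a.1 j - b.1 j| ≤ (p.length : ℤ) := by
  induction p with
  | nil => simp
  | @cons u v w h p ih =>
    have h1 : ∑ j, |u.1 j - v.1 j| = 1 := h.1
    have tri : ∑ j, |u.1 j - w.1 j| ≤ (∑ j, |u.1 j - v.1 j|) + ∑ j, |v.1 j - w.1 j| := by
      rw [← Finset.sum_add_distrib]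
      exact Finset.sum_le_sum fun j _ => abs_sub_le _ _ _
    simp only [SimpleGraph.Walk.length_cons, Nat.cast_add, Nat.cast_one]
    linarith

/-- Walks along coordinate `0`, of exact length. -/
lemma sq_walk_coord0 [NeZero d] (hR : 1 ≤ R) :
    ∀ k : ℕ, ∀ a b : ↥(sqVerts d R), b.1 ∈ sqInt d R →
    (∀ j, j ≠ 0 → a.1 j = b.1 j) → (a.1 0 - b.1 0).natAbs = k →
    |a.1 0| ≤ R + 1 →
    ∃ p : (sqGraph d R).Walk a b, p.length = k := by
  intro k
  induction k with
  | zero =>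
    intro a b hb hj h0 _
    have hab : a = b := by
      refine Subtype.ext (funext fun j => ?_)
      by_cases hj0 : j = 0
      · subst hj0; omega
      · exact hj j hj0
    subst hab
    exact ⟨SimpleGraph.Walk.nil, rfl⟩
  | succ k ih =>
    intro a b hb hj h0 ha
    have hb0 : |b.1 0| ≤ R := hb 0
    have hne : a.1 0 ≠ b.1 0 := by omega
    have hbR : -R ≤ b.1 0 ∧ b.1 0 ≤ R := abs_le.mp hb0
    have haR : -(R+1) ≤ a.1 0 ∧ a.1 0 ≤ R + 1 := abs_le.mp ha
    set s : ℤ := if a.1 0 < b.1 0 then 1 else -1 with hs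
    set a1 : Fin d → ℤ := Function.update a.1 0 (a.1 0 + s) with ha1
    have ha1int : a1 ∈ sqInt d R := by
      intro j
      by_cases hj0 : j = 0
      · subst hj0
        simp only [ha1, Function.update_self]
        by_cases hlt : a.1 0 < b.1 0
        · simp only [hs, if_pos hlt]
          exact abs_le.mpr ⟨by omega, by omega⟩
        · simp only [hs, if_neg hlt]
          exact abs_le.mpr ⟨by omega, by omega⟩
      · simp only [ha1, Function.update_of_ne hj0, hj j hj0]
        exact hb j
    set av : ↥(sqVerts d R) := ⟨a1, Or.inl ha1int⟩ with hav
    have hadj : (sqGraph d R).Adj a av := by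
      refine ⟨?_, Or.inr ha1int⟩
      show ∑ i, |a.1 i - a1 i| = 1
      rw [ha1, sq_sum_abs_update]
      by_cases hlt : a.1 0 < b.1 0 <;> simp [hs, hlt]
    have hstep : (a1 0 - b.1 0).natAbs = k := by
      have h1 : a1 0 = a.1 0 + s := Function.update_self 0 _ _
      rw [h1]
      by_cases hlt : a.1 0 < b.1 0
      · rw [hs, if_pos hlt]; omega
      · rw [hs, if_neg hlt]; omega
    have hj1 : ∀ j, j ≠ 0 → av.1 j = b.1 j := by
      intro j hj0
      simp only [hav, ha1, Function.update_of_ne hj0]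
      exact hj j hj0
    have ha1b : |av.1 0| ≤ R + 1 := le_trans (ha1int 0) (by omega)
    obtain ⟨p, hp⟩ := ih av b hb hj1 hstep ha1b
    exact ⟨SimpleGraph.Walk.cons hadj p, by simp [hp]⟩

/-- Any two interior vertices are connected. -/
lemma sq_reach_int [NeZero d] (hR : 1 ≤ R) :
    ∀ n : ℕ, ∀ a b : ↥(sqVerts d R), a.1 ∈ sqInt d R → b.1 ∈ sqInt d R →
    (∑ j, |a.1 j - b.1 j|).natAbs = n → (sqGraph d R).Reachable a b := by
  intro n
  induction n with
  | zero =>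
    intro a b ha hb h0
    have hsum0 : ∑ j, |a.1 j - b.1 j| = 0 := by
      have : 0 ≤ ∑ j, |a.1 j - b.1 j| := Finset.sum_nonneg fun j _ => abs_nonneg _
      omega
    have hall := (Finset.sum_eq_zero_iff_of_nonneg
      (fun j _ => abs_nonneg (a.1 j - b.1 j))).mp hsum0
    have hab : a = b := by
      refine Subtype.ext (funext fun j => ?_)
      have := hall j (Finset.mem_univ j)
      have := abs_eq_zero.mp this
      omega
    exact hab ▸ SimpleGraph.Reachable.refl a
  | succ n ih =>
    intro a b ha hb h0
    have hpos : ∑ j, |a.1 j - b.1 j| ≠ 0 := by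
      intro h; rw [h] at h0; simp at h0
    have hex : ∃ j, a.1 j ≠ b.1 j := by
      by_contra hc
      push_neg at hc
      exact hpos (Finset.sum_eq_zero fun j _ => by rw [hc j]; simp)
    obtain ⟨j, hjne⟩ := hex
    have haj : |a.1 j| ≤ R := ha j
    have hbj : |b.1 j| ≤ R := hb j
    have hajR := abs_le.mp haj
    have hbjR := abs_le.mp hbj
    set s : ℤ := if a.1 j < b.1 j then 1 else -1 with hs
    set a1 : Fin d → ℤ := Function.update a.1 j (a.1 j + s) with ha1
    have ha1int : a1 ∈ sqInt d R := by
      intro i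
      by_cases hij : i = j
      · subst hij
        simp only [ha1, Function.update_self]
        by_cases hlt : a.1 i < b.1 i
        · simp only [hs, if_pos hlt]
          exact abs_le.mpr ⟨by omega, by omega⟩
        · simp only [hs, if_neg hlt]
          exact abs_le.mpr ⟨by omega, by omega⟩
      · simp only [ha1, Function.update_of_ne hij]
        exact ha i
    set av : ↥(sqVerts d R) := ⟨a1, Or.inl ha1int⟩ with hav
    have hadj : (sqGraph d R).Adj a av := by
      refine ⟨?_, Or.inr ha1int⟩
      show ∑ i, |a.1 i - a1 i| = 1
      rw [ha1, sq_sum_abs_update]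
      by_cases hlt : a.1 j < b.1 j <;> simp [hs, hlt]
    -- the new ℓ¹ distance drops by exactly 1
    have hterm : |a1 j - b.1 j| = |a.1 j - b.1 j| - 1 := by
      simp only [ha1, Function.update_self]
      by_cases hlt : a.1 j < b.1 j
      · simp only [hs, if_pos hlt]
        rw [abs_of_nonpos (by omega), abs_of_nonpos (by omega)]; ring
      · simp only [hs, if_neg hlt]
        rw [abs_of_nonneg (by omega), abs_of_nonneg (by omega)]; ring
    have hfun : (fun i => |a1 i - b.1 i|)
        = Function.update (fun i => |a.1 i - b.1 i|) j (|a.1 j - b.1 j| - 1) := by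
      funext i
      by_cases hij : i = j
      · subst hij; rw [Function.update_self, ← hterm]
      · rw [Function.update_of_ne hij]
        simp [ha1, Function.update_of_ne hij]
    have hsum1 : ∑ i, |a1 i - b.1 i| = (∑ i, |a.1 i - b.1 i|) - 1 := by
      rw [hfun, Finset.sum_update_of_mem (Finset.mem_univ j),
        Finset.sdiff_singleton_eq_erase,
        ← Finset.add_sum_erase Finset.univ _ (Finset.mem_univ j)]
      ring
    have hnn1 : 0 ≤ ∑ i, |a1 i - b.1 i| := Finset.sum_nonneg fun i _ => abs_nonneg _
    have hnat : (∑ i, |a1 i - b.1 i|).natAbs = n := by omega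
    exact (hadj.reachable).trans (ih av b ha1int hb hnat)

lemma sq_sum_abs_update₂ (x : Fin d → ℤ) (j : Fin d) (s t : ℤ) :
    ∑ i, |Function.update x j s i - Function.update x j t i| = |s - t| := by
  rw [Finset.sum_eq_single j]
  · simp
  · intro i _ hij
    simp [Function.update_of_ne hij]
  · simp

/-- The key lemma: a point of `S` optimizing `ε * x 0` (for `ε = ±1`) is extreme. -/
lemma sq_extreme_of_opt [NeZero d] (hR : 1 ≤ R) (S : Finset ↥(sqVerts d R))
    (hSint : ∀ v ∈ S, v.1 ∈ sqInt d R) (x : ↥(sqVerts d R)) (hx : x ∈ S)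
    (ε : ℤ) (hε : ε = 1 ∨ ε = -1)
    (hopt : ∀ y ∈ S, ε * y.1 0 ≤ ε * x.1 0) : sqExtreme d R S x := by
  have hxint : x.1 ∈ sqInt d R := hSint x hx
  have hx0 := abs_le.mp (hxint 0)
  set w0 : Fin d → ℤ := Function.update x.1 0 (ε * (R + 1)) with hw0
  have hw00 : w0 0 = ε * (R + 1) := Function.update_self 0 _ _
  have hw0j : ∀ j : Fin d, j ≠ 0 → w0 j = x.1 j := fun j hj => Function.update_of_ne hj _ _
  have hw0ne : w0 ∉ sqInt d R := by
    intro h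
    have h2 := abs_le.mp (h 0)
    rw [hw00] at h2
    rcases hε with h1 | h1 <;> rw [h1] at h2 <;> omega
  have hy : Function.update x.1 0 (ε * R) ∈ sqInt d R := by
    intro i
    by_cases hi : i = 0
    · subst hi
      rw [Function.update_self]
      rcases hε with h1 | h1 <;> rw [h1] <;> exact abs_le.mpr ⟨by omega, by omega⟩
    · rw [Function.update_of_ne hi]; exact hxint i
  have hadjy : sqAdj d w0 (Function.update x.1 0 (ε * R)) := by
    show ∑ i, |w0 i - _| = 1
    rw [hw0, sq_sum_abs_update₂]
    rcases hε with h1 | h1 <;> rw [h1] <;> simp [mul_add] <;> omega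
  have hwbd : w0 ∈ sqBdry d R := ⟨hw0ne, _, hy, hadjy⟩
  set w : ↥(sqVerts d R) := ⟨w0, Or.inr hwbd⟩ with hw
  refine ⟨hx, w, hwbd, ?_⟩
  -- upper bound on dist w x
  have habs0 : |w0 0| ≤ R + 1 := by
    rw [hw00]
    rcases hε with h1 | h1 <;> rw [h1] <;> exact abs_le.mpr ⟨by omega, by omega⟩
  obtain ⟨p, hp⟩ := sq_walk_coord0 hR (w0 0 - x.1 0).natAbs w x hxint hw0j rfl habs0
  have hdx : (sqGraph d R).dist w x ≤ (w0 0 - x.1 0).natAbs := hp ▸ SimpleGraph.dist_le p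
  intro u hu hune
  have huint : u.1 ∈ sqInt d R := hSint u hu
  have hu0 := abs_le.mp (huint 0)
  -- lower bound on dist w u
  have hreach : (sqGraph d R).Reachable w u :=
    p.reachable.trans (sq_reach_int hR (∑ j, |x.1 j - u.1 j|).natAbs x u hxint huint rfl)
  obtain ⟨q, hq⟩ := hreach.exists_walk_length_eq_dist
  have hlow : ∑ j, |w0 j - u.1 j| ≤ ((sqGraph d R).dist w u : ℤ) := by
    have := sq_length_ge q
    rwa [hq] at this
  -- strict inequality between the ℓ¹ quantities
  have hsplit : ∑ j, |w0 j - u.1 j|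
      = |w0 0 - u.1 0| + ∑ j ∈ Finset.univ.erase 0, |w0 j - u.1 j| :=
    (Finset.add_sum_erase Finset.univ _ (Finset.mem_univ 0)).symm
  have hT : 0 ≤ ∑ j ∈ Finset.univ.erase 0, |w0 j - u.1 j| :=
    Finset.sum_nonneg fun j _ => abs_nonneg _
  have hopt' := hopt u hu
  have hkey : |w0 0 - x.1 0| < ∑ j, |w0 j - u.1 j| := by
    rw [hsplit]
    by_cases h00 : u.1 0 = x.1 0
    · -- some other coordinate differs
      have hexj : ∃ j : Fin d, j ≠ 0 ∧ u.1 j ≠ x.1 j := by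
        by_contra hc
        push_neg at hc
        apply hune
        refine Subtype.ext (funext fun j => ?_)
        by_cases hj : j = 0
        · subst hj; exact h00
        · exact hc j hj
      obtain ⟨j, hj0, hjne⟩ := hexj
      have h1T : 1 ≤ ∑ j ∈ Finset.univ.erase 0, |w0 j - u.1 j| := by
        have hle : |w0 j - u.1 j| ≤ ∑ j ∈ Finset.univ.erase 0, |w0 j - u.1 j| :=
          Finset.single_le_sum (f := fun j => |w0 j - u.1 j|) (fun i _ => abs_nonneg _)
            (Finset.mem_erase.mpr ⟨hj0, Finset.mem_univ j⟩)
        have h1 : 1 ≤ |w0 j - u.1 j| := by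
          rw [hw0j j hj0]
          exact Int.one_le_abs (by omega)
        omega
      rw [h00]
      omega
    · have hlt : ε * u.1 0 < ε * x.1 0 := by
        rcases hε with h1 | h1 <;> rw [h1] at hopt' ⊢ <;> omega
      have hcoord : |w0 0 - x.1 0| < |w0 0 - u.1 0| := by
        rw [hw00]
        rcases hε with h1 | h1 <;> rw [h1] at hlt ⊢
        · rw [abs_of_nonneg (by omega), abs_of_nonneg (by omega)]; omega
        · rw [abs_of_nonpos (by omega), abs_of_nonpos (by omega)]; omega
      omega
  have hcast : ((w0 0 - x.1 0).natAbs : ℤ) = |w0 0 - x.1 0| := (Int.abs_eq_natAbs _).symm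
  have : ((sqGraph d R).dist w x : ℤ) < ((sqGraph d R).dist w u : ℤ) := by
    calc ((sqGraph d R).dist w x : ℤ) ≤ ((w0 0 - x.1 0).natAbs : ℤ) := by exact_mod_cast hdx
      _ = |w0 0 - x.1 0| := hcast
      _ < ∑ j, |w0 j - u.1 j| := hkey
      _ ≤ ((sqGraph d R).dist w u : ℤ) := hlow
  exact_mod_cast this

end Aux

/-- In the square shaped domain, for any `S ⊆ Ṽ°` with `#S ≥ 2`, every
point maximizing `x₁` over `S` is extreme, every point minimizing `x₁` is extreme, and
`S` has at least two extreme points (two-points condition). -/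
theorem stmt_16 (d : ℕ) [NeZero d] (R : ℤ) (hR : 1 ≤ R)
    (S : Finset ↥(sqVerts d R)) (hSint : ∀ v ∈ S, v.1 ∈ sqInt d R)
    (hcard : 2 ≤ S.card) :
    (∀ x ∈ S, (∀ y ∈ S, y.1 0 ≤ x.1 0) → sqExtreme d R S x) ∧
    (∀ x ∈ S, (∀ y ∈ S, x.1 0 ≤ y.1 0) → sqExtreme d R S x) ∧
    ∃ v ∈ S, ∃ w ∈ S, v ≠ w ∧ sqExtreme d R S v ∧ sqExtreme d R S w := by
  have part1 : ∀ x ∈ S, (∀ y ∈ S, y.1 0 ≤ x.1 0) → sqExtreme d R S x := by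
    intro x hx hmax
    exact sq_extreme_of_opt hR S hSint x hx 1 (Or.inl rfl)
      (fun y hy => by have := hmax y hy; linarith)
  have part2 : ∀ x ∈ S, (∀ y ∈ S, x.1 0 ≤ y.1 0) → sqExtreme d R S x := by
    intro x hx hmin
    exact sq_extreme_of_opt hR S hSint x hx (-1) (Or.inr rfl)
      (fun y hy => by have := hmin y hy; linarith)
  refine ⟨part1, part2, ?_⟩
  have hne : S.Nonempty := Finset.card_pos.mp (by omega)
  obtain ⟨a, ha, hamax⟩ := S.exists_max_image (fun v => v.1 0) hne
  obtain ⟨b, hb, hbmin⟩ := S.exists_min_image (fun v => v.1 0) hne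
  by_cases hab : a = b
  · -- all points have the same first coordinate: every point is a maximizer
    obtain ⟨v, hv, w, hw, hvw⟩ := Finset.one_lt_card.mp (show 1 < S.card by omega)
    have hallmax : ∀ z ∈ S, ∀ y ∈ S, y.1 0 ≤ z.1 0 := by
      intro z hz y hy
      have h1 := hamax y hy
      have h2 := hbmin z hz
      rw [hab] at h1
      exact le_trans h1 h2
    exact ⟨v, hv, w, hw, hvw, part1 v hv (hallmax v hv), part1 w hw (hallmax w hw)⟩
  · exact ⟨a, ha, b, hb, hab, part1 a ha hamax, part2 b hb hbmin⟩
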